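/- Let n be a positive integer, 0 < p < 1, and let f : {0,1}^n → {0,1} be defined by f(x) = 1 if and only if x ≠ (0,…,0). Let A ⊆ [n], and let g : {0,1}^n → {0,1} be any function that depends only on the coordinates in A. Then ‖f − g‖_1 ≥ (1−p)^{|A|} · min( (1−p)^{n−|A|}, 1 − (1−p)^{n−|A|} ), where the L¹ norm is with respect to the p-biased measure μ_p^n. Moreover E[f(x) | x_A = (0,…,0)] = 1 − (1−p)^{n−|A|}. -/

import Mathlib

open MeasureTheory

/-- The influence of the `j`-th variable on `f : Xⁿ → {0,1}`:
the probability that resampling the `j`-th coordinate changes the value of `f`. -/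
noncomputable def influence {Ω : Type*} [MeasurableSpace Ω] (μ : Measure Ω) (n : ℕ)
    (f : (Fin n → Ω) → Bool) (j : Fin n) : ℝ :=
  (((Measure.pi fun _ : Fin n => μ).prod μ)
    {p : (Fin n → Ω) × Ω | f p.1 ≠ f (Function.update p.1 j p.2)}).toReal

/-- The total influence `I_f = Σ_j I_f(j)`. -/
noncomputable def totalInfluence {Ω : Type*} [MeasurableSpace Ω] (μ : Measure Ω) (n : ℕ)
    (f : (Fin n → Ω) → Bool) : ℝ :=
  ∑ j : Fin n, influence μ n f j

/-- The `p`-biased Bernoulli measure on `{0,1}`: `μ_p({1}) = p`, `μ_p({0}) = 1 - p`. -/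
noncomputable def bern (p : ℝ) : Measure Bool :=
  ENNReal.ofReal p • Measure.dirac true + ENNReal.ofReal (1 - p) • Measure.dirac false

lemma bern_false' (p : ℝ) : bern p {false} = ENNReal.ofReal (1 - p) := by simp [bern]

lemma bern_univ' (p : ℝ) (hp : 0 ≤ p) (hp1 : p ≤ 1) : bern p Set.univ = 1 := by
  simp [bern]; rw [← ENNReal.ofReal_add hp (by linarith)]; norm_num

lemma bern_prob' (p : ℝ) (hp : 0 ≤ p) (hp1 : p ≤ 1) : IsProbabilityMeasure (bern p) :=
  ⟨bern_univ' p hp hp1⟩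

lemma pi_cyl' {n : ℕ} {p : ℝ} (hp : 0 ≤ p) (hp1 : p ≤ 1) (S : Finset (Fin n)) :
    (Measure.pi fun _ : Fin n => bern p) {x | ∀ i ∈ S, x i = false}
      = ENNReal.ofReal (1 - p) ^ S.card := by
  haveI := bern_prob' p hp hp1
  have hset : {x : Fin n → Bool | ∀ i ∈ S, x i = false}
      = Set.pi Set.univ (fun i => if i ∈ S then {false} else Set.univ) := by
    ext x
    simp only [Set.mem_setOf_eq, Set.mem_pi, Set.mem_univ, forall_true_left]
    constructor
    · intro h i; by_cases hi : i ∈ S <;> simp [hi, h i]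
    · intro h i hi; have := h i; simpa [hi] using this
  rw [hset, Measure.pi_pi]
  have h1 : ∀ i : Fin n, bern p (if i ∈ S then ({false} : Set Bool) else Set.univ)
      = if i ∈ S then ENNReal.ofReal (1 - p) else 1 := by
    intro i; by_cases hi : i ∈ S
    · rw [if_pos hi, if_pos hi, bern_false']
    · rw [if_neg hi, if_neg hi]; exact measure_univ
  simp only [h1]
  rw [Finset.prod_ite_mem, Finset.univ_inter, Finset.prod_const]

/-- For `f(x) = 1 ↔ x ≠ (0,…,0)` on `({0,1}ⁿ, μ_pⁿ)` and any `g` depending only on the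
coordinates in `A`: `‖f - g‖₁ ≥ (1-p)^{|A|} · min((1-p)^{n-|A|}, 1-(1-p)^{n-|A|})`, and
`E[f(x) | x_A = (0,…,0)] = 1 - (1-p)^{n-|A|}`. -/
theorem nonzero_indicator_far_from_junta (n : ℕ) (hn : 0 < n) (p : ℝ) (hp : 0 < p)
    (hp1 : p < 1) (A : Finset (Fin n)) (g : (Fin n → Bool) → Bool)
    (hg : ∀ x y : Fin n → Bool, (∀ i ∈ A, x i = y i) → g x = g y) :
    (∫ x, |(if (decide (∃ i, x i = true) : Bool) then (1 : ℝ) else 0)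
          - (if g x then (1 : ℝ) else 0)| ∂(Measure.pi fun _ : Fin n => bern p) ≥
      (1 - p) ^ A.card *
        min ((1 - p) ^ (n - A.card)) (1 - (1 - p) ^ (n - A.card))) ∧
    (∫ x in {x : Fin n → Bool | ∀ i ∈ A, x i = false},
        (if (decide (∃ i, x i = true) : Bool) then (1 : ℝ) else 0)
        ∂(Measure.pi fun _ : Fin n => bern p)) /
      ((Measure.pi fun _ : Fin n => bern p)
        {x : Fin n → Bool | ∀ i ∈ A, x i = false}).toReal =
      1 - (1 - p) ^ (n - A.card) := by
  haveI := bern_prob' p hp.le hp1.le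
  set π : Measure (Fin n → Bool) := Measure.pi fun _ : Fin n => bern p with hπ
  haveI : IsProbabilityMeasure π := by rw [hπ]; infer_instance
  have meas : ∀ s : Set (Fin n → Bool), MeasurableSet s := fun s =>
    (Set.toFinite s).measurableSet
  set E : Set (Fin n → Bool) := {x | ∀ i ∈ A, x i = false} with hE
  set Z : Set (Fin n → Bool) := {x | ∀ i ∈ (Finset.univ : Finset (Fin n)), x i = false} with hZ
  set T : Set (Fin n → Bool) := {x | ∃ i, x i = true} with hT
  have h1p : (0:ℝ) < 1 - p := by linarith
  have hcard : A.card ≤ n := by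
    simpa using Finset.card_le_univ A
  have hπE : π E = ENNReal.ofReal (1 - p) ^ A.card := pi_cyl' hp.le hp1.le A
  have hπZ : π Z = ENNReal.ofReal (1 - p) ^ n := by
    rw [hZ, pi_cyl' hp.le hp1.le, Finset.card_univ, Fintype.card_fin]
  have hZE : Z ⊆ E := fun x hx i _ => hx i (Finset.mem_univ i)
  have hTE : T ∩ E = E \ Z := by
    ext x
    simp only [hT, hZ, hE, Set.mem_inter_iff, Set.mem_diff, Set.mem_setOf_eq,
      Finset.mem_univ, forall_true_left, not_forall]
    constructor
    · rintro ⟨⟨i, hi⟩, h2⟩; exact ⟨h2, ⟨i, by simp [hi]⟩⟩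
    · rintro ⟨h2, ⟨i, hi⟩⟩
      exact ⟨⟨i, by cases h : x i <;> simp_all⟩, h2⟩
  have hne : (ENNReal.ofReal (1 - p) : ENNReal) ^ A.card ≠ ⊤ := by
    exact ENNReal.pow_ne_top ENNReal.ofReal_ne_top
  have hle : (ENNReal.ofReal (1 - p) : ENNReal) ^ n ≤ ENNReal.ofReal (1 - p) ^ A.card :=
    pow_le_pow_of_le_one (zero_le') (ENNReal.ofReal_le_one.2 (by linarith)) hcard
  have hZfin : π Z ≠ ⊤ := by
    rw [hπZ]; exact ENNReal.pow_ne_top ENNReal.ofReal_ne_top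
  have hπTE : π (T ∩ E) = ENNReal.ofReal (1 - p) ^ A.card - ENNReal.ofReal (1 - p) ^ n := by
    rw [hTE, measure_diff hZE (meas Z).nullMeasurableSet hZfin, hπE, hπZ]
  have htr : ∀ k : ℕ, ((ENNReal.ofReal (1 - p)) ^ k).toReal = (1 - p) ^ k := by
    intro k; rw [ENNReal.toReal_pow, ENNReal.toReal_ofReal h1p.le]
  have hπTEr : (π (T ∩ E)).toReal = (1 - p) ^ A.card - (1 - p) ^ n := by
    rw [hπTE, ENNReal.toReal_sub_of_le hle hne, htr, htr]
  have hpow : (1 - p) ^ n = (1 - p) ^ A.card * (1 - p) ^ (n - A.card) := by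
    rw [← pow_add, Nat.add_sub_cancel' hcard]
  -- the indicator rewriting
  have hind : (fun x : Fin n → Bool =>
      (if (decide (∃ i, x i = true) : Bool) then (1 : ℝ) else 0))
      = T.indicator (fun _ => (1:ℝ)) := by
    funext x
    by_cases h : ∃ i, x i = true <;> simp [h, hT, Set.indicator_apply]
  have hintE : ∀ s : Set (Fin n → Bool),
      (∫ x in E, s.indicator (fun _ => (1:ℝ)) x ∂π) = (π (s ∩ E)).toReal := by
    intro s
    rw [integral_indicator (meas s), setIntegral_const, smul_eq_mul, mul_one, Measure.real,
      Measure.restrict_apply (meas s)]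
  constructor
  · -- part 1
    set c : Bool := g (fun _ => false) with hc
    have hgE : ∀ x ∈ E, g x = c := fun x hx => hg x _ (fun i hi => by
      simpa using hx i hi)
    have hFnn : 0 ≤ᵐ[π] fun x : Fin n → Bool =>
        |(if (decide (∃ i, x i = true) : Bool) then (1 : ℝ) else 0)
          - (if g x then (1 : ℝ) else 0)| :=
      Filter.Eventually.of_forall fun x => abs_nonneg _
    have hint : Integrable (fun x : Fin n → Bool =>
        |(if (decide (∃ i, x i = true) : Bool) then (1 : ℝ) else 0)
          - (if g x then (1 : ℝ) else 0)|) π := Integrable.of_finite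
    have step1 := setIntegral_le_integral (s := E) hint hFnn
    have step2 : (∫ x in E,
        |(if (decide (∃ i, x i = true) : Bool) then (1 : ℝ) else 0)
          - (if g x then (1 : ℝ) else 0)| ∂π)
        = ∫ x in E, |(if (decide (∃ i, x i = true) : Bool) then (1 : ℝ) else 0)
          - (if c then (1 : ℝ) else 0)| ∂π := by
      apply setIntegral_congr_fun (meas E)
      intro x hx
      simp only
      rw [hgE x hx]
    have hmin : (1 - p) ^ A.card *
        min ((1 - p) ^ (n - A.card)) (1 - (1 - p) ^ (n - A.card)) ≤
        ∫ x in E, |(if (decide (∃ i, x i = true) : Bool) then (1 : ℝ) else 0)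
          - (if c then (1 : ℝ) else 0)| ∂π := by
      cases hcv : c with
      | true =>
        have habs : (fun x : Fin n → Bool =>
            |(if (decide (∃ i, x i = true) : Bool) then (1 : ℝ) else 0)
              - (if (true : Bool) then (1 : ℝ) else 0)|)
            = Z.indicator (fun _ => (1:ℝ)) := by
          funext x
          by_cases h : ∃ i, x i = true
          · have hxZ : x ∉ Z := by
              obtain ⟨i, hi⟩ := h
              intro hall
              rw [hall i (Finset.mem_univ i)] at hi
              exact absurd hi (by simp)
            rw [if_pos (by simpa using h), Set.indicator_of_notMem hxZ]
            norm_num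
          · push_neg at h
            simp only [Bool.not_eq_true] at h
            have hxZ : x ∈ Z := fun i _ => h i
            rw [if_neg (by simp [h]), Set.indicator_of_mem hxZ]
            norm_num
        rw [habs, hintE Z, Set.inter_eq_self_of_subset_left hZE, hπZ, htr, hpow]
        exact mul_le_mul_of_nonneg_left (min_le_left _ _) (pow_nonneg h1p.le _)
      | false =>
        have habs : (fun x : Fin n → Bool =>
            |(if (decide (∃ i, x i = true) : Bool) then (1 : ℝ) else 0)
              - (if (false : Bool) then (1 : ℝ) else 0)|)
            = T.indicator (fun _ => (1:ℝ)) := by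
          funext x
          by_cases h : ∃ i, x i = true <;> simp [h, hT, Set.indicator_apply]
        rw [habs, hintE T, hπTEr, hpow]
        have : (1 - p) ^ A.card - (1 - p) ^ A.card * (1 - p) ^ (n - A.card)
            = (1 - p) ^ A.card * (1 - (1 - p) ^ (n - A.card)) := by ring
        rw [this]
        exact mul_le_mul_of_nonneg_left (min_le_right _ _) (pow_nonneg h1p.le _)
    calc (1 - p) ^ A.card *
        min ((1 - p) ^ (n - A.card)) (1 - (1 - p) ^ (n - A.card))
        ≤ ∫ x in E, |(if (decide (∃ i, x i = true) : Bool) then (1 : ℝ) else 0)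
          - (if c then (1 : ℝ) else 0)| ∂π := hmin
      _ = ∫ x in E, |(if (decide (∃ i, x i = true) : Bool) then (1 : ℝ) else 0)
          - (if g x then (1 : ℝ) else 0)| ∂π := step2.symm
      _ ≤ _ := step1
  · -- part 2
    rw [hind, hintE T, hπTEr, hπE, htr, hpow]
    have hA0 : (1 - p) ^ A.card ≠ 0 := pow_ne_zero _ (by linarith)
    field_simp
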